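/- Every μ-measure-zero subset of 2^ω can be covered by 𝔡 many closed measure-zero sets: for every null G ⊆ 2^ω there exists a family C of closed μ-measure-zero subsets of 2^ω with |C| ≤ 𝔡 and G ⊆ ⋃C. -/

import Mathlib

open MeasureTheory Set Filter Cardinal

/-- `μ` is the uniform product ("fair coin") probability measure on Cantor space `2^ω`,
characterized by its values on cylinders. -/
def IsFairCoin (μ : Measure (ℕ → Bool)) : Prop :=
  ∀ (s : Finset ℕ) (σ : ℕ → Bool),
    μ {x : ℕ → Bool | ∀ i ∈ s, x i = σ i} = (1 / 2 : ENNReal) ^ s.card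

/-- The σ-ideal of μ-null sets. -/
def nullIdeal (μ : Measure (ℕ → Bool)) : Set (Set (ℕ → Bool)) := {A | μ A = 0}

/-- The σ-ideal of meager subsets of Cantor space. -/
def meagerIdeal : Set (Set (ℕ → Bool)) := {A | IsMeagre A}

/-- The σ-ideal generated by closed measure zero sets. -/
def closedNullIdeal (μ : Measure (ℕ → Bool)) : Set (Set (ℕ → Bool)) :=
  {A | ∃ F : ℕ → Set (ℕ → Bool), (∀ n, IsClosed (F n) ∧ μ (F n) = 0) ∧ A ⊆ ⋃ n, F n}

/-- `add(I, J)`: the least cardinality of a subfamily of `I` whose union is not in `J`. -/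
noncomputable def addIJ (I J : Set (Set (ℕ → Bool))) : Cardinal :=
  sInf {c : Cardinal | ∃ A : Set (Set (ℕ → Bool)), A ⊆ I ∧ ⋃₀ A ∉ J ∧ c = #A}

/-- `cov(J)`: the least cardinality of a subfamily of `J` covering the whole space. -/
noncomputable def covI (J : Set (Set (ℕ → Bool))) : Cardinal :=
  sInf {c : Cardinal | ∃ A : Set (Set (ℕ → Bool)), A ⊆ J ∧ ⋃₀ A = Set.univ ∧ c = #A}

/-- `unif(J)`: the least cardinality of a set of reals not in `J`. -/
noncomputable def unifI (J : Set (Set (ℕ → Bool))) : Cardinal :=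
  sInf {c : Cardinal | ∃ X : Set (ℕ → Bool), X ∉ J ∧ c = #X}

/-- `cof(I, J)`: the least cardinality of a subfamily of `J` cofinal over `I`. -/
noncomputable def cofIJ (I J : Set (Set (ℕ → Bool))) : Cardinal :=
  sInf {c : Cardinal | ∃ A : Set (Set (ℕ → Bool)), A ⊆ J ∧
    (∀ B ∈ I, ∃ C ∈ A, B ⊆ C) ∧ c = #A}

/-- The dominating number 𝔡. -/
noncomputable def frakD : Cardinal :=
  sInf {c : Cardinal | ∃ F : Set (ℕ → ℕ),
    (∀ g : ℕ → ℕ, ∃ f ∈ F, ∀ᶠ n in atTop, g n ≤ f n) ∧ c = #F}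

/-- The unbounding number 𝔟. -/
noncomputable def frakB : Cardinal :=
  sInf {c : Cardinal | ∃ F : Set (ℕ → ℕ),
    (∀ g : ℕ → ℕ, ∃ f ∈ F, ¬ ∀ᶠ n in atTop, f n ≤ g n) ∧ c = #F}


noncomputable def cylE : ℕ ≃ Finset ℕ × Finset ℕ := (Denumerable.eqv _).symm

def cylN (n : ℕ) : Set (ℕ → Bool) := {x | ∀ i ∈ (cylE n).1, x i = decide (i ∈ (cylE n).2)}

lemma isClosed_cylgen (s : Finset ℕ) (σ : ℕ → Bool) :
    IsClosed {x : ℕ → Bool | ∀ i ∈ s, x i = σ i} := by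
  have : {x : ℕ → Bool | ∀ i ∈ s, x i = σ i} = ⋂ i ∈ s, (fun x : ℕ → Bool => x i) ⁻¹' {σ i} := by
    ext x; simp [Set.mem_iInter]
  rw [this]
  exact isClosed_biInter fun i _ => (isClosed_singleton).preimage (continuous_apply i)

lemma isClosed_cylN (n : ℕ) : IsClosed (cylN n) :=
  isClosed_cylgen (cylE n).1 (fun i => decide (i ∈ (cylE n).2))

lemma cylN_basis {U : Set (ℕ → Bool)} (hU : IsOpen U) {x : ℕ → Bool} (hx : x ∈ U) :
    ∃ n, x ∈ cylN n ∧ cylN n ⊆ U := by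
  obtain ⟨I, u, h1, h2⟩ := isOpen_pi_iff.mp hU x hx
  refine ⟨cylE.symm (I, I.filter (fun i => x i = true)), ?_, ?_⟩
  · show ∀ i ∈ (cylE (cylE.symm _)).1, _
    rw [Equiv.apply_symm_apply]
    intro i hi
    cases hxi : x i <;> simp [Finset.mem_filter, hi, hxi]
  · intro y hy
    apply h2
    intro i hi
    have hyi : y i = decide (i ∈ I.filter (fun i => x i = true)) := by
      have := hy
      rw [cylN, Set.mem_setOf_eq, Equiv.apply_symm_apply] at this
      exact this i hi
    have hi' : i ∈ I := hi
    have hxi : x i = decide (i ∈ I.filter (fun i => x i = true)) := by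
      cases hv : x i <;> simp [Finset.mem_filter, hi', hv]
    rw [hyi, ← hxi]
    exact (h1 i hi).2

theorem null_covered_by_d_closed_null (μ : Measure (ℕ → Bool)) (hμ : IsFairCoin μ)
    (G : Set (ℕ → Bool)) (hG : μ G = 0) :
    ∃ C : Set (Set (ℕ → Bool)),
      (∀ A ∈ C, IsClosed A ∧ μ A = 0) ∧ #C ≤ frakD ∧ G ⊆ ⋃₀ C := by
  classical
  -- μ is a finite measure
  have huniv : μ Set.univ = 1 := by
    have := hμ ∅ (fun _ => true); simpa using this
  haveI : IsFiniteMeasure μ := ⟨by rw [huniv]; exact ENNReal.one_lt_top⟩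
  -- open sets of small measure
  have hU : ∀ k : ℕ, ∃ U, G ⊆ U ∧ IsOpen U ∧ μ U < 2⁻¹ ^ k := by
    intro k
    obtain ⟨U, hGU, hUo, hUμ⟩ := G.exists_isOpen_lt_of_lt ((2⁻¹ : ENNReal) ^ k)
      (by rw [hG]; exact ENNReal.pow_pos (by norm_num) k)
    exact ⟨U, hGU, hUo, hUμ⟩
  choose U hGU hUo hUμ using hU
  -- a minimal dominating family
  have hne : {c : Cardinal | ∃ F : Set (ℕ → ℕ),
      (∀ g : ℕ → ℕ, ∃ f ∈ F, ∀ᶠ n in atTop, g n ≤ f n) ∧ c = #F}.Nonempty :=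
    ⟨#(Set.univ : Set (ℕ → ℕ)), Set.univ,
      fun g => ⟨g, Set.mem_univ _, Eventually.of_forall fun _ => le_rfl⟩, rfl⟩
  obtain ⟨F, hFdom, hFcard⟩ := csInf_mem hne
  have hinf : ℵ₀ ≤ #↥F := by
    rw [Cardinal.aleph0_le_mk_iff, Set.infinite_coe_iff]
    show ¬F.Finite
    intro hfin
    obtain ⟨f, hf, hev⟩ := hFdom (fun n => (hfin.toFinset.sup fun h => h n) + 1)
    obtain ⟨n, hn⟩ := hev.exists
    have h2 : f n ≤ hfin.toFinset.sup (fun h => h n) :=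
      Finset.le_sup (f := fun h => h n) (hfin.mem_toFinset.mpr hf)
    have hn' : (hfin.toFinset.sup fun h => h n) + 1 ≤ f n := hn
    exact Nat.not_succ_le_self _ (hn'.trans h2)
  -- the closed null sets
  let W : ℕ → ℕ → Set (ℕ → Bool) := fun k j =>
    ⋃ n ∈ Finset.range (j + 1), if cylN n ⊆ U k then cylN n else ∅
  let K : (ℕ → ℕ) → ℕ → Set (ℕ → Bool) := fun f k₀ => ⋂ j, W (k₀ + j) (f (k₀ + j))
  have hWclosed : ∀ k j, IsClosed (W k j) := by
    intro k j
    apply Set.Finite.isClosed_biUnion (Finset.range (j + 1)).finite_toSet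
    intro n _; split_ifs; exacts [isClosed_cylN n, isClosed_empty]
  have hWU : ∀ k j, W k j ⊆ U k := by
    intro k j
    refine Set.iUnion₂_subset fun n _ => ?_
    split_ifs with h; exacts [h, Set.empty_subset _]
  have hKclosed : ∀ f k₀, IsClosed (K f k₀) := fun f k₀ =>
    isClosed_iInter fun j => hWclosed _ _
  have hKnull : ∀ f k₀, μ (K f k₀) = 0 := by
    intro f k₀
    refine le_antisymm ?_ zero_le
    have hb : ∀ j, μ (K f k₀) ≤ 2⁻¹ ^ j := by
      intro j
      calc μ (K f k₀) ≤ μ (U (k₀ + j)) :=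
            measure_mono ((Set.iInter_subset _ j).trans (hWU _ _))
        _ ≤ 2⁻¹ ^ (k₀ + j) := (hUμ _).le
        _ ≤ 2⁻¹ ^ j := pow_le_pow_of_le_one (by norm_num) (by norm_num) (Nat.le_add_left j k₀)
    exact ge_of_tendsto' (ENNReal.tendsto_pow_atTop_nhds_zero_of_lt_one (by norm_num)) hb
  -- the cover
  refine ⟨Set.range (fun p : ↥F × ℕ => K p.1 p.2), ?_, ?_, ?_⟩
  · rintro A ⟨⟨⟨f, hf⟩, k₀⟩, rfl⟩
    exact ⟨hKclosed f k₀, hKnull f k₀⟩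
  · calc #(Set.range (fun p : ↥F × ℕ => K p.1 p.2)) ≤ #(↥F × ℕ) := Cardinal.mk_range_le
      _ = #↥F * ℵ₀ := by simp [Cardinal.mk_prod]
      _ = #↥F := Cardinal.mul_eq_left hinf hinf Cardinal.aleph0_ne_zero
      _ = frakD := hFcard.symm
  · intro x hxG
    choose g h1 h2 using fun k => cylN_basis (hUo k) (hGU k hxG)
    obtain ⟨f, hfF, hev⟩ := hFdom g
    obtain ⟨k₀, hk₀⟩ := eventually_atTop.mp hev
    refine ⟨K f k₀, ⟨(⟨f, hfF⟩, k₀), rfl⟩, ?_⟩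
    refine Set.mem_iInter.mpr fun j => ?_
    have hmem : g (k₀ + j) ∈ Finset.range (f (k₀ + j) + 1) :=
      Finset.mem_range.mpr (Nat.lt_succ_of_le (hk₀ (k₀ + j) (Nat.le_add_right _ _)))
    refine Set.mem_biUnion hmem ?_
    rw [if_pos (h2 (k₀ + j))]
    exact h1 (k₀ + j)
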